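/- Let q ∈ ℂ with q ≠ 0 and q² ≠ 1, and let ε ∈ {q, q⁻¹}. Let A be the 4×4 complex block-diagonal matrix A = diag(a, b) where a is the 2×2 Jordan block with eigenvalue ε (a = εI + e₁₂ in 2×2) and b is the 2×2 Jordan block with eigenvalue 1. Suppose B and B' are 4×4 complex matrices with AB = qBA, B'A = qAB', and BB' = qB'B. Then BB' = 0. -/

import Mathlib

open Matrix

/-- If `A` consists of two `2×2` Jordan blocks with eigenvalues `ε ∈ {q, q⁻¹}`
and `1`, then any `B, B'` with `AB = qBA`, `B'A = qAB'` and `BB' = qB'B`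
satisfy `BB' = 0`. -/
theorem two_jordan_blocks_qcomm_product_zero
    (q : ℂ) (hq0 : q ≠ 0) (hq2 : q ^ 2 ≠ 1)
    (ε : ℂ) (hε : ε = q ∨ ε = q⁻¹)
    (A B B' : Matrix (Fin 4) (Fin 4) ℂ)
    (hA : A = diagonal ![ε, ε, 1, 1] +
      single (0 : Fin 4) (1 : Fin 4) (1 : ℂ) +
      single (2 : Fin 4) (3 : Fin 4) (1 : ℂ))
    (hB : A * B = q • (B * A))
    (hB' : B' * A = q • (A * B'))
    (hBB' : B * B' = q • (B' * B)) :
    B * B' = 0 := by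
  have key : ∀ c x : ℂ, c ≠ 0 → c * x = 0 → x = 0 := fun c x hc h =>
    (mul_eq_zero.mp h).resolve_left hc
  have hq1 : q ≠ 1 := fun h => hq2 (by rw [h]; norm_num)
  have n2 : (1 : ℂ) - q ≠ 0 := sub_ne_zero_of_ne (Ne.symm hq1)
  have n1 : (1 : ℂ) - q ^ 2 ≠ 0 := sub_ne_zero_of_ne (Ne.symm hq2)
  have n3 : q - q ^ 2 ≠ 0 := fun h => (mul_ne_zero hq0 n2) (by linear_combination h)
  have hAm : A = !![ε,1,0,0; 0,ε,0,0; 0,0,1,1; 0,0,0,1] := by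
    subst hA; ext i j; fin_cases i <;> fin_cases j <;>
      simp [single, diagonal, Matrix.vecHead, Matrix.vecTail]
  clear hA
  have e1 : ∀ i j : Fin 4, (A * B) i j = q * (B * A) i j := fun i j => by
    rw [hB]; simp
  have e2 : ∀ i j : Fin 4, (B' * A) i j = q * ((A * B') i j) := fun i j => by
    rw [hB']; simp
  have e3 : ∀ i j : Fin 4, (B * B') i j = q * ((B' * B) i j) := fun i j => by
    rw [hBB']; simp
  rcases hε with hε | hε <;> rw [hε] at hAm
  · -- ε = q : rows 2,3 of B vanish, rows 0,1 of B' vanish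
    have h30 := e1 3 0; have h31 := e1 3 1; have h32 := e1 3 2; have h33 := e1 3 3
    have h20 := e1 2 0; have h21 := e1 2 1; have h22 := e1 2 2; have h23 := e1 2 3
    simp only [hAm, Matrix.mul_apply, Fin.sum_univ_four, Matrix.cons_val', Matrix.cons_val_zero,
      Matrix.cons_val_one, Matrix.head_cons, Matrix.empty_val', Matrix.cons_val_fin_one,
      Matrix.head_fin_const, Matrix.cons_val_two, Matrix.cons_val_three, Matrix.tail_cons,
      Matrix.of_apply, mul_zero, zero_mul, add_zero, zero_add, mul_one, one_mul]
      at h30 h31 h32 h33 h20 h21 h22 h23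
    have hb30 : B 3 0 = 0 := key _ _ n1 (by linear_combination h30)
    have hb31 : B 3 1 = 0 := key _ _ n1 (by linear_combination h31 + q * hb30)
    have hb32 : B 3 2 = 0 := key _ _ n2 (by linear_combination h32)
    have hb33 : B 3 3 = 0 := key _ _ n2 (by linear_combination h33 + q * hb32)
    have hb20 : B 2 0 = 0 := key _ _ n1 (by linear_combination h20 - hb30)
    have hb21 : B 2 1 = 0 := key _ _ n1 (by linear_combination h21 - hb31 + q * hb20)
    have hb22 : B 2 2 = 0 := key _ _ n2 (by linear_combination h22 - hb32)
    have hb23 : B 2 3 = 0 := key _ _ n2 (by linear_combination h23 - hb33 + q * hb22)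
    have g10 := e2 1 0; have g11 := e2 1 1; have g12 := e2 1 2; have g13 := e2 1 3
    have g00 := e2 0 0; have g01 := e2 0 1; have g02 := e2 0 2; have g03 := e2 0 3
    simp only [hAm, Matrix.mul_apply, Fin.sum_univ_four, Matrix.cons_val', Matrix.cons_val_zero,
      Matrix.cons_val_one, Matrix.head_cons, Matrix.empty_val', Matrix.cons_val_fin_one,
      Matrix.head_fin_const, Matrix.cons_val_two, Matrix.cons_val_three, Matrix.tail_cons,
      Matrix.of_apply, mul_zero, zero_mul, add_zero, zero_add, mul_one, one_mul]
      at g10 g11 g12 g13 g00 g01 g02 g03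
    have hc10 : B' 1 0 = 0 := key _ _ n3 (by linear_combination g10)
    have hc11 : B' 1 1 = 0 := key _ _ n3 (by linear_combination g11 - hc10)
    have hc12 : B' 1 2 = 0 := key _ _ n1 (by linear_combination g12)
    have hc13 : B' 1 3 = 0 := key _ _ n1 (by linear_combination g13 - hc12)
    have hc00 : B' 0 0 = 0 := key _ _ n3 (by linear_combination g00 + q * hc10)
    have hc01 : B' 0 1 = 0 := key _ _ n3 (by linear_combination g01 - hc00 + q * hc11)
    have hc02 : B' 0 2 = 0 := key _ _ n1 (by linear_combination g02 + q * hc12)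
    have hc03 : B' 0 3 = 0 := key _ _ n1 (by linear_combination g03 - hc02 + q * hc13)
    ext i j
    fin_cases i
    · rw [e3]; simp [Matrix.mul_apply, Fin.sum_univ_four, hc00, hc01, hc02, hc03]
    · rw [e3]; simp [Matrix.mul_apply, Fin.sum_univ_four, hc10, hc11, hc12, hc13]
    · simp [Matrix.mul_apply, Fin.sum_univ_four, hb20, hb21, hb22, hb23]
    · simp [Matrix.mul_apply, Fin.sum_univ_four, hb30, hb31, hb32, hb33]
  · -- ε = q⁻¹ : rows 0,1 of B vanish, rows 2,3 of B' vanish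
    have hs : q * q⁻¹ = 1 := mul_inv_cancel₀ hq0
    have n4 : q⁻¹ - 1 ≠ 0 := fun h => hq1 (inv_eq_one.mp (sub_eq_zero.mp h))
    have n5 : q⁻¹ - q ≠ 0 := by
      intro h
      apply hq2
      have h' := sub_eq_zero.mp h
      have h2 : q * q⁻¹ = q * q := by rw [h']
      rw [hs] at h2
      linear_combination -h2
    have h10 := e1 1 0; have h11 := e1 1 1; have h12 := e1 1 2; have h13 := e1 1 3
    have h00 := e1 0 0; have h01 := e1 0 1; have h02 := e1 0 2; have h03 := e1 0 3
    simp only [hAm, Matrix.mul_apply, Fin.sum_univ_four, Matrix.cons_val', Matrix.cons_val_zero,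
      Matrix.cons_val_one, Matrix.head_cons, Matrix.empty_val', Matrix.cons_val_fin_one,
      Matrix.head_fin_const, Matrix.cons_val_two, Matrix.cons_val_three, Matrix.tail_cons,
      Matrix.of_apply, mul_zero, zero_mul, add_zero, zero_add, mul_one, one_mul]
      at h10 h11 h12 h13 h00 h01 h02 h03
    have hb10 : B 1 0 = 0 := key _ _ n4 (by linear_combination h10 + B 1 0 * hs)
    have hb11 : B 1 1 = 0 := key _ _ n4 (by linear_combination h11 + B 1 1 * hs + q * hb10)
    have hb12 : B 1 2 = 0 := key _ _ n5 (by linear_combination h12)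
    have hb13 : B 1 3 = 0 := key _ _ n5 (by linear_combination h13 + q * hb12)
    have hb00 : B 0 0 = 0 := key _ _ n4 (by linear_combination h00 + B 0 0 * hs - hb10)
    have hb01 : B 0 1 = 0 := key _ _ n4 (by linear_combination h01 + B 0 1 * hs - hb11 + q * hb00)
    have hb02 : B 0 2 = 0 := key _ _ n5 (by linear_combination h02 - hb12)
    have hb03 : B 0 3 = 0 := key _ _ n5 (by linear_combination h03 - hb13 + q * hb02)
    have g30 := e2 3 0; have g31 := e2 3 1; have g32 := e2 3 2; have g33 := e2 3 3
    have g20 := e2 2 0; have g21 := e2 2 1; have g22 := e2 2 2; have g23 := e2 2 3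
    simp only [hAm, Matrix.mul_apply, Fin.sum_univ_four, Matrix.cons_val', Matrix.cons_val_zero,
      Matrix.cons_val_one, Matrix.head_cons, Matrix.empty_val', Matrix.cons_val_fin_one,
      Matrix.head_fin_const, Matrix.cons_val_two, Matrix.cons_val_three, Matrix.tail_cons,
      Matrix.of_apply, mul_zero, zero_mul, add_zero, zero_add, mul_one, one_mul]
      at g30 g31 g32 g33 g20 g21 g22 g23
    have hc30 : B' 3 0 = 0 := key _ _ n5 (by linear_combination g30)
    have hc31 : B' 3 1 = 0 := key _ _ n5 (by linear_combination g31 - hc30)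
    have hc32 : B' 3 2 = 0 := key _ _ n2 (by linear_combination g32)
    have hc33 : B' 3 3 = 0 := key _ _ n2 (by linear_combination g33 - hc32)
    have hc20 : B' 2 0 = 0 := key _ _ n5 (by linear_combination g20 + q * hc30)
    have hc21 : B' 2 1 = 0 := key _ _ n5 (by linear_combination g21 - hc20 + q * hc31)
    have hc22 : B' 2 2 = 0 := key _ _ n2 (by linear_combination g22 + q * hc32)
    have hc23 : B' 2 3 = 0 := key _ _ n2 (by linear_combination g23 - hc22 + q * hc33)
    ext i j
    fin_cases i
    · simp [Matrix.mul_apply, Fin.sum_univ_four, hb00, hb01, hb02, hb03]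
    · simp [Matrix.mul_apply, Fin.sum_univ_four, hb10, hb11, hb12, hb13]
    · rw [e3]; simp [Matrix.mul_apply, Fin.sum_univ_four, hc20, hc21, hc22, hc23]
    · rw [e3]; simp [Matrix.mul_apply, Fin.sum_univ_four, hc30, hc31, hc32, hc33]
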